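/- For the airtime cost sharing: if the power requests received by a parent node j from its M child nodes are sorted as 0 = p_0 ≤ p_1 ≤ ... ≤ p_M, then the Shapley value cost share of the k-th child (with respect to the radio-link cost function P(S) = max of requests in S) equals the telescoping sum ∑_{n=1}^{k} (p_n − p_{n−1})/(M + 1 − n). -/

import Mathlib

open Finset

/-- Shapley value of player `i` for coalition cost function `P` on `M` players. -/
noncomputable def shapley (M : ℕ) (P : Finset (Fin M) → ℝ) (i : Fin M) : ℝ :=
  ∑ S ∈ (Finset.univ.erase i).powerset,
    ((Nat.factorial S.card * Nat.factorial (M - S.card - 1) : ℕ) : ℝ) / (Nat.factorial M : ℝ)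
      * (P (insert i S) - P S)

/-- Radio-link cost of a coalition: the maximum request in it (0 for the empty coalition). -/
noncomputable def maxCost (M : ℕ) (r : Fin M → ℝ) (S : Finset (Fin M)) : ℝ :=
  if h : S.Nonempty then S.sup' h r else 0

/-- Key combinatorial identity: `∑_{s=0}^n C(n,s) s! (M-s-1)! = M!/(M-n)` for `n < M`. -/
lemma key_fact (M n : ℕ) (hn : n < M) :
    ∑ s ∈ Finset.range (n + 1),
        ((n.choose s : ℝ) * (s.factorial : ℝ) * ((M - s - 1).factorial : ℝ))
      = (M.factorial : ℝ) / ((M : ℝ) - n) := by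
  have hMn : (0:ℝ) < (M : ℝ) - n := by
    have : (n : ℝ) < M := by exact_mod_cast hn
    linarith
  rw [eq_div_iff (ne_of_gt hMn)]
  -- telescoping sum with G s = choose n s * s! * (M-s)!
  set G : ℕ → ℝ := fun s => (n.choose s : ℝ) * (s.factorial : ℝ) * ((M - s).factorial : ℝ)
    with hG
  have hstep : ∀ s ∈ Finset.range (n + 1),
      (n.choose s : ℝ) * (s.factorial : ℝ) * ((M - s - 1).factorial : ℝ) * ((M : ℝ) - n)
        = G s - G (s + 1) := by
    intro s hs
    rw [Finset.mem_range] at hs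
    have hsn : s ≤ n := Nat.lt_succ_iff.mp hs
    have hsM : s < M := lt_of_le_of_lt hsn hn
    have h1 : M - s = (M - s - 1) + 1 := by omega
    have hx : ((M - s - 1 : ℕ) : ℝ) = (M:ℝ) - (s:ℝ) - 1 := by
      rw [Nat.cast_sub (by omega : 1 ≤ M - s), Nat.cast_sub (by omega : s ≤ M), Nat.cast_one]
    have h2 : ((M - s).factorial : ℝ) = ((M:ℝ) - s) * ((M - s - 1).factorial : ℝ) := by
      rw [h1, Nat.factorial_succ]
      push_cast
      rw [hx]; ring
    have h3 : (n.choose (s+1) : ℝ) * ((s+1).factorial : ℝ)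
        = (n.choose s : ℝ) * (s.factorial : ℝ) * ((n:ℝ) - s) := by
      have hc : (n.choose (s+1) : ℝ) * ((s:ℝ)+1) = (n.choose s : ℝ) * ((n:ℝ) - s) := by
        have h := Nat.choose_succ_right_eq n s
        have h2 : ((n.choose (s+1) * (s+1) : ℕ) : ℝ) = ((n.choose s * (n - s) : ℕ) : ℝ) := by
          exact_mod_cast h
        push_cast [Nat.cast_sub hsn] at h2
        linarith
      rw [Nat.factorial_succ]
      push_cast
      calc (n.choose (s+1) : ℝ) * (((s:ℝ) + 1) * (s.factorial : ℝ))
          = ((n.choose (s+1) : ℝ) * ((s:ℝ)+1)) * (s.factorial : ℝ) := by ring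
        _ = (n.choose s : ℝ) * ((n:ℝ) - s) * (s.factorial : ℝ) := by rw [hc]
        _ = (n.choose s : ℝ) * (s.factorial : ℝ) * ((n:ℝ) - s) := by ring
    have h4 : M - (s + 1) = M - s - 1 := by omega
    rw [hG]
    simp only [h4]
    rw [h2, h3]
    ring
  rw [Finset.sum_mul, Finset.sum_congr rfl hstep, Finset.sum_range_sub' G]
  have hGn : G (n + 1) = 0 := by
    simp [hG, Nat.choose_eq_zero_of_lt (Nat.lt_succ_self n)]
  rw [hGn]
  simp [hG, Nat.factorial]

/-- Marginal contribution of `k` to a coalition `S` avoiding `k`, as a telescoping sum. -/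
lemma marg_formula (M : ℕ) (p : ℕ → ℝ) (hp0 : p 0 = 0)
    (hmono : ∀ a b, a ≤ b → b ≤ M → p a ≤ p b) (k : Fin M)
    (S : Finset (Fin M)) (hkS : k ∉ S) :
    maxCost M (fun i => p (i.1 + 1)) (insert k S) - maxCost M (fun i => p (i.1 + 1)) S
      = ∑ n ∈ Finset.range (k.1 + 1),
          (p (n + 1) - p n) * (if ∀ i ∈ S, (i : ℕ) < n then 1 else 0) := by
  set r : Fin M → ℝ := fun i => p (i.1 + 1) with hrdef
  have hrmono : ∀ a b : Fin M, a ≤ b → r a ≤ r b := by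
    intro a b hab
    have hab' : a.1 ≤ b.1 := hab
    exact hmono (a.1 + 1) (b.1 + 1) (Nat.succ_le_succ hab') b.isLt
  rcases S.eq_empty_or_nonempty with h | h
  · subst h
    have h1 : maxCost M r (insert k ∅) = r k := by
      simp [maxCost]
    have h2 : maxCost M r (∅ : Finset (Fin M)) = 0 := by simp [maxCost]
    rw [h1, h2]
    simp only [Finset.notMem_empty, false_implies, implies_true, if_true, mul_one]
    rw [Finset.sum_range_sub (fun n => p n), hp0]
  · have hins : (insert k S).Nonempty := Finset.insert_nonempty k S
    set m : Fin M := S.max' h with hm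
    have hmem : m ∈ S := S.max'_mem h
    have hle : ∀ i ∈ S, i ≤ m := fun i hi => S.le_max' i hi
    have hsup : S.sup' h r = r m :=
      le_antisymm (Finset.sup'_le h r fun i hi => hrmono _ _ (hle i hi))
        (Finset.le_sup' r hmem)
    have hLHS : maxCost M r (insert k S) - maxCost M r S = max (r k) (r m) - r m := by
      rw [maxCost, maxCost, dif_pos hins, dif_pos h, Finset.sup'_insert (H := h), hsup]
    have hmk : m ≠ k := fun hc => hkS (hc ▸ hmem)
    rcases lt_or_gt_of_ne hmk with hlt | hgt
    · -- m < k
      have hmk' : (m : ℕ) < (k : ℕ) := hlt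
      have hrk : r m ≤ r k := hrmono _ _ (le_of_lt hlt)
      rw [hLHS, max_eq_left hrk]
      -- indicator ↔ m.1 < n
      have hind : ∀ n : ℕ, (∀ i ∈ S, (i : ℕ) < n) ↔ (m : ℕ) < n := by
        intro n
        constructor
        · intro hf; exact hf m hmem
        · intro hn i hi; exact lt_of_le_of_lt (hle i hi) hn
      have : ∀ n ∈ Finset.range (k.1 + 1),
          (p (n + 1) - p n) * (if ∀ i ∈ S, (i : ℕ) < n then 1 else 0)
            = if (m : ℕ) < n then p (n + 1) - p n else 0 := by
        intro n _
        by_cases hc : (m : ℕ) < n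
        · rw [if_pos ((hind n).mpr hc), if_pos hc, mul_one]
        · rw [if_neg (fun hf => hc ((hind n).mp hf)), if_neg hc, mul_zero]
      rw [Finset.sum_congr rfl this, Finset.sum_ite, Finset.sum_const_zero, add_zero]
      have hfe : (Finset.range (k.1 + 1)).filter (fun n => (m : ℕ) < n)
          = Finset.Ico ((m : ℕ) + 1) (k.1 + 1) := by
        ext n
        simp only [Finset.mem_filter, Finset.mem_range, Finset.mem_Ico]
        omega
      rw [hfe, Finset.sum_Ico_eq_sub _ (by omega : (m : ℕ) + 1 ≤ k.1 + 1),
        Finset.sum_range_sub (fun n => p n), Finset.sum_range_sub (fun n => p n)]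
      simp [hrdef]
    · -- k < m
      have hrk : r k ≤ r m := hrmono _ _ (le_of_lt hgt)
      rw [hLHS, max_eq_right hrk, sub_self]
      symm
      apply Finset.sum_eq_zero
      intro n hn
      rw [Finset.mem_range] at hn
      have : ¬ (∀ i ∈ S, (i : ℕ) < n) := by
        intro hf
        have := hf m hmem
        have hkm : (k : ℕ) < (m : ℕ) := hgt
        omega
      rw [if_neg this, mul_zero]

/-- The Shapley value of the k-th child (0-indexed, representing the (k+1)-th request)
for the max cost function equals the telescoping sum `∑_{n=1}^{k+1} (p_n - p_{n-1})/(M+1-n)`. -/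
theorem shapley_max_telescoping (M : ℕ) (p : ℕ → ℝ)
    (hp0 : p 0 = 0) (hnonneg : ∀ n, 0 ≤ p n)
    (hmono : ∀ a b, a ≤ b → b ≤ M → p a ≤ p b) (k : Fin M) :
    shapley M (maxCost M (fun i => p (i.1 + 1))) k
      = ∑ n ∈ Finset.range (k.1 + 1), (p (n + 1) - p n) / ((M : ℝ) - n) := by
  rw [shapley]
  have hrw : ∀ S ∈ (Finset.univ.erase k).powerset,
      ((Nat.factorial S.card * Nat.factorial (M - S.card - 1) : ℕ) : ℝ) / (Nat.factorial M : ℝ)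
        * (maxCost M (fun i => p (i.1 + 1)) (insert k S) - maxCost M (fun i => p (i.1 + 1)) S)
      = ∑ n ∈ Finset.range (k.1 + 1),
          ((Nat.factorial S.card * Nat.factorial (M - S.card - 1) : ℕ) : ℝ)
            / (Nat.factorial M : ℝ)
          * ((p (n + 1) - p n) * (if ∀ i ∈ S, (i : ℕ) < n then 1 else 0)) := by
    intro S hS
    rw [Finset.mem_powerset] at hS
    have hkS : k ∉ S := fun hc => (Finset.mem_erase.mp (hS hc)).1 rfl
    rw [marg_formula M p hp0 hmono k S hkS, Finset.mul_sum]
  rw [Finset.sum_congr rfl hrw, Finset.sum_comm]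
  apply Finset.sum_congr rfl
  intro n hn
  rw [Finset.mem_range] at hn
  have hnk : n ≤ k.1 := Nat.lt_succ_iff.mp hn
  have hnM : n < M := lt_of_le_of_lt hnk k.isLt
  -- pull out the constant (p (n+1) - p n)
  have hpull : ∀ S ∈ (Finset.univ.erase k).powerset,
      ((Nat.factorial S.card * Nat.factorial (M - S.card - 1) : ℕ) : ℝ) / (Nat.factorial M : ℝ)
        * ((p (n + 1) - p n) * (if ∀ i ∈ S, (i : ℕ) < n then 1 else 0))
      = (p (n + 1) - p n) *
        (if ∀ i ∈ S, (i : ℕ) < n then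
          ((Nat.factorial S.card * Nat.factorial (M - S.card - 1) : ℕ) : ℝ)
            / (Nat.factorial M : ℝ) else 0) := by
    intro S _
    by_cases hc : ∀ i ∈ S, (i : ℕ) < n
    · rw [if_pos hc, if_pos hc]; ring
    · rw [if_neg hc, if_neg hc]; ring
  rw [Finset.sum_congr rfl hpull, ← Finset.mul_sum, Finset.sum_ite, Finset.sum_const_zero,
    add_zero]
  -- the filtered powerset is the powerset of A = {i : i.1 < n}
  have hA : ((Finset.univ.erase k).powerset.filter
      (fun S : Finset (Fin M) => ∀ i ∈ S, (i : ℕ) < n))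
      = (Finset.univ.filter (fun i : Fin M => (i : ℕ) < n)).powerset := by
    ext S
    simp only [Finset.mem_filter, Finset.mem_powerset]
    constructor
    · rintro ⟨hsub, hlt⟩ i hi
      simp only [Finset.mem_filter, Finset.mem_univ, true_and]
      exact hlt i hi
    · intro h
      constructor
      · intro i hi
        have hin := Finset.mem_filter.mp (h hi)
        simp only [Finset.mem_erase, Finset.mem_univ, and_true]
        intro hik
        rw [hik] at hin
        omega
      · intro i hi
        exact (Finset.mem_filter.mp (h hi)).2
  have hcardA : (Finset.univ.filter (fun i : Fin M => (i : ℕ) < n)).card = n := by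
    have : (Finset.univ.filter (fun i : Fin M => (i : ℕ) < n)) = Finset.Iio (⟨n, hnM⟩ : Fin M) := by
      ext i
      simp [Fin.lt_def]
    rw [this, Fin.card_Iio]
  rw [hA]
  have hsum := Finset.sum_powerset_apply_card
    (f := fun c : ℕ => ((Nat.factorial c * Nat.factorial (M - c - 1) : ℕ) : ℝ)
      / (Nat.factorial M : ℝ))
    (x := Finset.univ.filter (fun i : Fin M => (i : ℕ) < n))
  rw [hsum, hcardA]
  have : ∑ j ∈ Finset.range (n + 1), n.choose j •
      (((Nat.factorial j * Nat.factorial (M - j - 1) : ℕ) : ℝ) / (Nat.factorial M : ℝ))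
      = (∑ j ∈ Finset.range (n + 1),
          ((n.choose j : ℝ) * (j.factorial : ℝ) * ((M - j - 1).factorial : ℝ)))
        / (Nat.factorial M : ℝ) := by
    rw [Finset.sum_div]
    apply Finset.sum_congr rfl
    intro j _
    rw [nsmul_eq_mul]
    push_cast
    ring
  rw [this, key_fact M n hnM]
  have hfac : (Nat.factorial M : ℝ) ≠ 0 := by
    exact_mod_cast Nat.factorial_ne_zero M
  rw [div_right_comm, div_self hfac, mul_one_div]
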